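/- arXiv:1804.00936 — 2 statements merged into one kernel-verified Lean document; each statement's English description precedes it below -/
import Mathlib

section
/- For each κ > 0, the map t ↦ f_κ(t) f_κ'(t)/t is strictly decreasing on (0,∞), where f_κ'(t) = (1 + 2κ f_κ(t)²)^{-1/2}. -/
open Real Filter Set

/-- `Fk κ t = ∫₀ᵗ √(1 + 2κ s²) ds`. -/
noncomputable def Fk (κ t : ℝ) : ℝ := ∫ s in (0:ℝ)..t, Real.sqrt (1 + 2*κ*s^2)

/-- `f` is the inverse of `Fk κ` on `[0,∞)`. -/
def IsInvF (κ : ℝ) (f : ℝ → ℝ) : Prop :=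
  (∀ s, 0 ≤ s → f (Fk κ s) = s) ∧ ∀ t, 0 ≤ t → 0 ≤ f t ∧ Fk κ (f t) = t

/-- The derivative formula `f_κ'(t) = (1 + 2κ f_κ(t)²)^{-1/2}`. -/
noncomputable def fd (κ : ℝ) (f : ℝ → ℝ) (t : ℝ) : ℝ :=
  1 / Real.sqrt (1 + 2*κ*(f t)^2)

lemma phi_cont (κ : ℝ) : Continuous (fun s : ℝ => Real.sqrt (1 + 2*κ*s^2)) := by
  fun_prop

lemma phi_pos (κ : ℝ) (hκ : 0 < κ) (s : ℝ) : 0 < Real.sqrt (1 + 2*κ*s^2) := by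
  apply Real.sqrt_pos.2
  nlinarith [sq_nonneg s, mul_nonneg (le_of_lt hκ) (sq_nonneg s)]

lemma Fk_sub (κ a b : ℝ) :
    Fk κ b - Fk κ a = ∫ s in a..b, Real.sqrt (1 + 2*κ*s^2) := by
  have h := intervalIntegral.integral_add_adjacent_intervals
    (μ := MeasureTheory.volume)
    ((phi_cont κ).intervalIntegrable 0 a) ((phi_cont κ).intervalIntegrable a b)
  unfold Fk
  linarith [h]

lemma Fk_mono (κ : ℝ) {a b : ℝ} (hab : a ≤ b) : Fk κ a ≤ Fk κ b := by
  have h := Fk_sub κ a b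
  have : (0:ℝ) ≤ ∫ s in a..b, Real.sqrt (1 + 2*κ*s^2) :=
    intervalIntegral.integral_nonneg hab (fun x _ => Real.sqrt_nonneg _)
  linarith

lemma Fk_zero (κ : ℝ) : Fk κ 0 = 0 := by
  simp [Fk]

lemma key (κ : ℝ) (hκ : 0 < κ) {s₁ s₂ : ℝ} (h1 : 0 < s₁) (h12 : s₁ < s₂) :
    s₂ * Fk κ s₁ < s₁ * Fk κ s₂ := by
  set p := Real.sqrt (1 + 2*κ*s₁^2) with hp
  have hA : Fk κ s₁ < s₁ * p := by
    have := intervalIntegral.integral_lt_integral_of_continuousOn_of_le_of_exists_lt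
      (f := fun s : ℝ => Real.sqrt (1 + 2*κ*s^2)) (g := fun _ => p) (a := 0) (b := s₁)
      h1 ((phi_cont κ).continuousOn) (continuousOn_const)
      (fun x hx => by
        apply Real.sqrt_le_sqrt
        have hxx : x * x ≤ s₁ * s₁ :=
          mul_self_le_mul_self (le_of_lt hx.1) hx.2
        nlinarith [hκ, hxx])
      ⟨0, ⟨le_refl 0, le_of_lt h1⟩, by
        rw [show (1:ℝ) + 2*κ*(0:ℝ)^2 = 1 by ring, Real.sqrt_one]
        rw [hp]
        have : (1:ℝ) < 1 + 2*κ*s₁^2 := by nlinarith [mul_pos hκ (mul_pos h1 h1)]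
        calc (1:ℝ) = Real.sqrt 1 := by simp
          _ < Real.sqrt (1 + 2*κ*s₁^2) := Real.sqrt_lt_sqrt (by norm_num) this⟩
    have h0 : Fk κ s₁ = ∫ s in (0:ℝ)..s₁, Real.sqrt (1 + 2*κ*s^2) := rfl
    rw [h0]
    simpa using this
  have hB : (s₂ - s₁) * p ≤ Fk κ s₂ - Fk κ s₁ := by
    rw [Fk_sub κ s₁ s₂]
    have := intervalIntegral.integral_mono_on (a := s₁) (b := s₂)
      (f := fun _ => p) (g := fun s : ℝ => Real.sqrt (1 + 2*κ*s^2))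
      (le_of_lt h12) (intervalIntegrable_const (μ := MeasureTheory.volume)) ((phi_cont κ).intervalIntegrable s₁ s₂)
      (fun x hx => by
        apply Real.sqrt_le_sqrt
        have hxx : s₁ * s₁ ≤ x * x :=
          mul_self_le_mul_self (le_of_lt h1) hx.1
        nlinarith [hκ, hxx])
    simpa [mul_comm] using this
  nlinarith [hA, hB, h1, h12, mul_le_mul_of_nonneg_left hB (le_of_lt h1),
    mul_lt_mul_of_pos_left hA (show (0:ℝ) < s₂ - s₁ by linarith)]

theorem stmt_8 (κ : ℝ) (hκ : 0 < κ) (f : ℝ → ℝ) (hf : IsInvF κ f) :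
    StrictAntiOn (fun t => f t * fd κ f t / t) (Set.Ioi 0) := by
  intro t₁ ht₁ t₂ ht₂ h12
  simp only [Set.mem_Ioi] at ht₁ ht₂
  obtain ⟨hl, hr⟩ := hf
  obtain ⟨hs₁0, hF₁⟩ := hr t₁ (le_of_lt ht₁)
  obtain ⟨hs₂0, hF₂⟩ := hr t₂ (le_of_lt ht₂)
  set s₁ := f t₁ with hs₁def
  set s₂ := f t₂ with hs₂def
  have hs₁ : 0 < s₁ := by
    rcases lt_or_eq_of_le hs₁0 with h | h
    · exact h
    · exfalso; rw [← h, Fk_zero] at hF₁; linarith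
  have hslt : s₁ < s₂ := by
    by_contra hc
    push_neg at hc
    have := Fk_mono κ hc
    rw [hF₁, hF₂] at this
    linarith
  have hkey : s₂ * t₁ < s₁ * t₂ := by
    rw [← hF₁, ← hF₂]; exact key κ hκ hs₁ hslt
  have hp₁ := phi_pos κ hκ s₁
  have hp₂ := phi_pos κ hκ s₂
  set p₁ := Real.sqrt (1 + 2*κ*s₁^2) with hp₁def
  set p₂ := Real.sqrt (1 + 2*κ*s₂^2) with hp₂def
  have hsq : s₁^2 < s₂^2 := by nlinarith [hs₁, hslt, mul_lt_mul_of_pos_left hslt hs₁]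
  have hplt : p₁ < p₂ := by
    rw [hp₁def, hp₂def]
    apply Real.sqrt_lt_sqrt (by positivity)
    nlinarith [mul_pos hκ (sub_pos.2 hsq)]
  have hs₂p : 0 < s₂ := lt_trans hs₁ hslt
  have main : s₂ * t₁ * p₁ < s₁ * t₂ * p₂ := by
    nlinarith [mul_pos (mul_pos hs₂p ht₁) hp₁,
      mul_lt_mul_of_pos_left hplt (mul_pos hs₂p ht₁),
      mul_lt_mul_of_pos_right hkey hp₂]
  simp only [fd]
  rw [div_lt_div_iff₀ ht₂ ht₁]
  have e₂ : s₂ * (1 / p₂) * t₁ = (s₂ * t₁ * p₁) / (p₁ * p₂) := by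
    field_simp
  have e₁ : s₁ * (1 / p₁) * t₂ = (s₁ * t₂ * p₂) / (p₁ * p₂) := by
    field_simp
  rw [← hs₁def, ← hs₂def, ← hp₁def, ← hp₂def, e₂, e₁]
  gcongr
end

section
/- Let Ω ⊂ ℝᴺ be a bounded domain, κ > 0, λ > 0, b > 0 constants, p > 1, and let v ∈ C²(cl Ω) be a positive solution of -Δv = λ f_κ(v) f_κ'(v) - b f_κ(v)^p f_κ'(v) in Ω with v = 0 on ∂Ω. Then b · f_κ(v(x))^{p-1} ≤ λ for all x ∈ Ω. -/
open Real Filter Set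

/-- Laplacian of  at , computed with derivatives within . -/
noncomputable def lapWithin {N : ℕ} (v : EuclideanSpace ℝ (Fin N) → ℝ)
    (s : Set (EuclideanSpace ℝ (Fin N))) (x : EuclideanSpace ℝ (Fin N)) : ℝ :=
  ∑ i : Fin N, iteratedFDerivWithin ℝ 2 v s x
    ![EuclideanSpace.single i 1, EuclideanSpace.single i 1]

open Topology in
lemma Fk_strictMono {κ : ℝ} (hκ : 0 < κ) : StrictMono (Fk κ) := by
  intro a c hac
  have hcont : Continuous fun s : ℝ => Real.sqrt (1 + 2*κ*s^2) := by fun_prop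
  have hint : ∀ u w : ℝ,
      IntervalIntegrable (fun s => Real.sqrt (1 + 2*κ*s^2)) MeasureTheory.volume u w :=
    fun u w => hcont.intervalIntegrable u w
  have hadd : Fk κ a + ∫ s in a..c, Real.sqrt (1 + 2*κ*s^2) = Fk κ c :=
    intervalIntegral.integral_add_adjacent_intervals (hint 0 a) (hint a c)
  have hlow : c - a ≤ ∫ s in a..c, Real.sqrt (1 + 2*κ*s^2) := by
    have := intervalIntegral.integral_mono_on (f := fun _ : ℝ => (1:ℝ))
      (g := fun s => Real.sqrt (1 + 2*κ*s^2)) hac.le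
      (intervalIntegrable_const) (hint a c) (fun s hs => by
        rw [Real.one_le_sqrt]
        nlinarith [sq_nonneg s])
    simpa using this
  linarith

open Topology in
lemma secondDeriv_nonpos_of_isLocalMax {g : ℝ → ℝ}
    (hg : ContDiffAt ℝ 2 g 0) (hmax : IsLocalMax g 0) :
    deriv (deriv g) 0 ≤ 0 := by
  by_contra hL
  push_neg at hL
  obtain ⟨u, hu, hgu⟩ := hg.contDiffOn le_rfl (by simp)
  set U := interior u with hU
  have hUo : IsOpen U := isOpen_interior
  have h0U : (0:ℝ) ∈ U := mem_interior_iff_mem_nhds.2 hu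
  have hgU : ContDiffOn ℝ 2 g U := hgu.mono interior_subset
  have hder := (contDiffOn_succ_iff_deriv_of_isOpen (n := 1) hUo).1 (by exact_mod_cast hgU)
  have hdg1 : ContDiffOn ℝ 1 (deriv g) U := hder.2.2
  have hdd : HasDerivAt (deriv g) (deriv (deriv g) 0) 0 :=
    ((hdg1.differentiableOn one_ne_zero).differentiableAt (hUo.mem_nhds h0U)).hasDerivAt
  have hdg0 : deriv g 0 = 0 := hmax.deriv_eq_zero
  have hslope : Tendsto (slope (deriv g) 0) (𝓝[≠] 0) (𝓝 (deriv (deriv g) 0)) :=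
    hasDerivAt_iff_tendsto_slope.1 hdd
  have hev : ∀ᶠ t in 𝓝[>] (0:ℝ), 0 < slope (deriv g) 0 t :=
    (hslope.mono_left (nhdsWithin_mono _ (fun t ht => ht.ne'))).eventually
      (eventually_gt_nhds hL)
  have hpos : ∀ᶠ t in 𝓝[>] (0:ℝ), 0 < deriv g t := by
    filter_upwards [hev, self_mem_nhdsWithin] with t ht ht'
    have h1 : 0 < deriv g t / t := by
      simpa [slope_def_field, hdg0] using ht
    rcases div_pos_iff.1 h1 with ⟨h, _⟩ | ⟨_, h⟩
    · exact h
    · exact absurd (mem_Ioi.1 ht') (not_lt.2 h.le)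
  obtain ⟨w, hw, hIoo⟩ := mem_nhdsGT_iff_exists_Ioo_subset.1 hpos
  have hEmem : U ∩ {t | g t ≤ g 0} ∈ 𝓝 (0:ℝ) :=
    Filter.inter_mem (hUo.mem_nhds h0U) hmax
  obtain ⟨r, hr, hball⟩ := Metric.mem_nhds_iff.1 hEmem
  set δ : ℝ := min (w / 2) (r / 2) with hδ
  have hδpos : 0 < δ := lt_min (by linarith [mem_Ioi.1 hw]) (by linarith)
  have hIccU : Icc (0:ℝ) δ ⊆ U ∩ {t | g t ≤ g 0} := by
    intro t ht
    apply hball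
    rw [Metric.mem_ball, Real.dist_eq, sub_zero, abs_of_nonneg ht.1]
    exact lt_of_le_of_lt ht.2 (lt_of_le_of_lt (min_le_right _ _) (by linarith))
  have hmono : StrictMonoOn g (Icc (0:ℝ) δ) := by
    apply strictMonoOn_of_deriv_pos (convex_Icc 0 δ)
    · exact (hgU.continuousOn).mono (fun t ht => (hIccU ht).1)
    · intro t ht
      rw [interior_Icc] at ht
      exact hIoo ⟨ht.1, lt_of_lt_of_le ht.2
        (le_trans (min_le_left _ _) (by linarith [mem_Ioi.1 hw]))⟩
  have : g 0 < g δ := hmono (left_mem_Icc.2 hδpos.le) (right_mem_Icc.2 hδpos.le) hδpos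
  exact absurd (hIccU (right_mem_Icc.2 hδpos.le)).2 (not_le.2 this)

open Topology in
lemma hessian_nonpos {E : Type*} [NormedAddCommGroup E] [NormedSpace ℝ E]
    {v : E → ℝ} {z : E} (hv : ContDiffAt ℝ 2 v z) (hmax : IsLocalMax v z) (e : E) :
    fderiv ℝ (fderiv ℝ v) z e e ≤ 0 := by
  set l : ℝ → E := fun t => z + t • e with hl
  have hl0 : l 0 = z := by simp [hl]
  have hlC : ContDiff ℝ 2 l := contDiff_const.add (contDiff_id.smul contDiff_const)
  have hlder : ∀ t : ℝ, HasDerivAt l e t := by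
    intro t
    simpa [hl] using ((hasDerivAt_id t).smul_const e).const_add z
  have hg : ContDiffAt ℝ 2 (v ∘ l) 0 := by
    refine ContDiffAt.comp 0 ?_ hlC.contDiffAt
    rwa [hl0]
  have hgmax : IsLocalMax (v ∘ l) 0 := by
    rw [← hl0] at hmax
    exact hmax.comp_continuous hlC.continuous.continuousAt
  obtain ⟨u, hu, hvu⟩ := hv.contDiffOn le_rfl (by simp)
  set U := interior u with hU
  have hUo : IsOpen U := isOpen_interior
  have hzU : z ∈ U := mem_interior_iff_mem_nhds.2 hu
  have hvU : ContDiffOn ℝ 2 v U := hvu.mono interior_subset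
  have hdvU : ∀ y ∈ U, HasFDerivAt v (fderiv ℝ v y) y := fun y hy =>
    ((hvU.differentiableOn (by norm_num)).differentiableAt (hUo.mem_nhds hy)).hasFDerivAt
  have hfd1 : ContDiffOn ℝ 1 (fderiv ℝ v) U := hvU.fderiv_of_isOpen hUo (by norm_num)
  have hfd2 : HasFDerivAt (fderiv ℝ v) (fderiv ℝ (fderiv ℝ v) z) z :=
    ((hfd1.differentiableOn one_ne_zero).differentiableAt (hUo.mem_nhds hzU)).hasFDerivAt
  have hq : HasDerivAt (fun t => fderiv ℝ v (l t)) (fderiv ℝ (fderiv ℝ v) z e) 0 := by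
    rw [← hl0] at hfd2
    have h := hfd2.comp_hasDerivAt (x := (0:ℝ)) (hlder 0)
    rw [hl0] at h
    exact h
  have heval : HasDerivAt (fun t => fderiv ℝ v (l t) e) (fderiv ℝ (fderiv ℝ v) z e e) 0 := by
    have := hq.clm_apply (hasDerivAt_const (0:ℝ) e)
    simpa using this
  have hlcont : Continuous l := hlC.continuous
  have hnearU : ∀ᶠ t in 𝓝 (0:ℝ), l t ∈ U := by
    have hUn : U ∈ 𝓝 (l 0) := hUo.mem_nhds (by rwa [hl0])
    exact hlcont.continuousAt.eventually_mem hUn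
  have hderiv_eq : deriv (v ∘ l) =ᶠ[𝓝 (0:ℝ)] fun t => fderiv ℝ v (l t) e := by
    filter_upwards [hnearU] with t ht
    exact ((hdvU (l t) ht).comp_hasDerivAt t (hlder t)).deriv
  have key : deriv (deriv (v ∘ l)) 0 = fderiv ℝ (fderiv ℝ v) z e e := by
    rw [hderiv_eq.deriv_eq]
    exact heval.deriv
  rw [← key]
  exact secondDeriv_nonpos_of_isLocalMax hg hgmax

theorem stmt_13 {N : ℕ} (Ω : Set (EuclideanSpace ℝ (Fin N)))
    (hΩo : IsOpen Ω) (hΩc : IsConnected Ω) (hΩb : Bornology.IsBounded Ω)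
    (κ lam b p : ℝ) (hκ : 0 < κ) (hlam : 0 < lam) (hb : 0 < b) (hp : 1 < p)
    (fκ : ℝ → ℝ) (hfκ : IsInvF κ fκ)
    (v : EuclideanSpace ℝ (Fin N) → ℝ)
    (hv : ContDiffOn ℝ 2 v (closure Ω))
    (hpos : ∀ x ∈ Ω, 0 < v x)
    (hbd : ∀ x ∈ frontier Ω, v x = 0)
    (heq : ∀ x ∈ Ω, -lapWithin v (closure Ω) x
        = lam * fκ (v x) * fd κ fκ (v x) - b * (fκ (v x)) ^ p * fd κ fκ (v x)) :
    ∀ x ∈ Ω, b * (fκ (v x)) ^ (p - 1) ≤ lam := by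
  intro x hx
  -- basic facts about fκ
  have hFmono := Fk_strictMono hκ
  have hf_nonneg : ∀ t, 0 ≤ t → 0 ≤ fκ t := fun t ht => (hfκ.2 t ht).1
  have hf_mono : ∀ s t, 0 ≤ s → s ≤ t → fκ s ≤ fκ t := by
    intro s t hs hst
    by_contra h
    push_neg at h
    have h2 := hFmono h
    rw [(hfκ.2 t (hs.trans hst)).2, (hfκ.2 s hs).2] at h2
    linarith
  have hFk0 : Fk κ 0 = 0 := by simp [Fk]
  have hf_pos : ∀ t, 0 < t → 0 < fκ t := by
    intro t ht
    rcases (hf_nonneg t ht.le).lt_or_eq with h | h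
    · exact h
    · exfalso
      have h2 := (hfκ.2 t ht.le).2
      rw [← h, hFk0] at h2
      linarith
  -- maximum point
  have hKc : IsCompact (closure Ω) :=
    Metric.isCompact_of_isClosed_isBounded isClosed_closure hΩb.closure
  obtain ⟨z, hzK, hzmax⟩ := hKc.exists_isMaxOn ⟨x, subset_closure hx⟩ hv.continuousOn
  have hzΩ : z ∈ Ω := by
    by_contra hz
    have hfr : z ∈ frontier Ω := by
      rw [frontier, hΩo.interior_eq]
      exact ⟨hzK, hz⟩
    have h0 : v z = 0 := hbd z hfr
    have h1 : v x ≤ v z := hzmax (subset_closure hx)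
    have h2 : 0 < v x := hpos x hx
    rw [h0] at h1
    linarith
  have hKnz : closure Ω ∈ nhds z := mem_of_superset (hΩo.mem_nhds hzΩ) subset_closure
  have hlocmax : IsLocalMax v z := hzmax.isLocalMax hKnz
  have hvz : ContDiffAt ℝ 2 v z := hv.contDiffAt hKnz
  -- Laplacian at z is nonpositive
  have hlap : lapWithin v (closure Ω) z ≤ 0 := by
    unfold lapWithin
    apply Finset.sum_nonpos
    intro i _
    have h1 : iteratedFDerivWithin ℝ 2 v (closure Ω) z = iteratedFDeriv ℝ 2 v z := by
      calc iteratedFDerivWithin ℝ 2 v (closure Ω) z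
          = iteratedFDerivWithin ℝ 2 v (closure Ω ∩ Ω) z :=
            (iteratedFDerivWithin_inter (hΩo.mem_nhds hzΩ)).symm
        _ = iteratedFDerivWithin ℝ 2 v Ω z := by
            rw [inter_eq_self_of_subset_right subset_closure]
        _ = iteratedFDeriv ℝ 2 v z := iteratedFDerivWithin_of_isOpen 2 hΩo hzΩ
    rw [h1, iteratedFDeriv_two_apply]
    simp only [Matrix.cons_val_zero, Matrix.cons_val_one, Matrix.head_cons]
    exact hessian_nonpos hvz hlocmax _
  -- the equation at z forces b * fκ(v z)^p ≤ lam * fκ(v z)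
  have hrhs : 0 ≤ lam * fκ (v z) * fd κ fκ (v z) - b * fκ (v z) ^ p * fd κ fκ (v z) := by
    rw [← heq z hzΩ]
    linarith
  have hfd_pos : 0 < fd κ fκ (v z) := by
    unfold fd
    apply div_pos one_pos
    apply Real.sqrt_pos.2
    nlinarith [sq_nonneg (fκ (v z))]
  have hvz_pos : 0 < v z := hpos z hzΩ
  have hfvz_pos : 0 < fκ (v z) := hf_pos _ hvz_pos
  have hkey : b * fκ (v z) ^ p ≤ lam * fκ (v z) := by
    nlinarith [hrhs, hfd_pos]
  have hz_bound : b * fκ (v z) ^ (p - 1) ≤ lam := by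
    have hfp : fκ (v z) ^ p = fκ (v z) ^ (p - 1) * fκ (v z) := by
      rw [← Real.rpow_add_one hfvz_pos.ne' (p - 1)]
      ring_nf
    rw [hfp] at hkey
    have h3 : (b * fκ (v z) ^ (p - 1)) * fκ (v z) ≤ lam * fκ (v z) := by
      rw [mul_assoc]
      exact hkey
    exact le_of_mul_le_mul_right h3 hfvz_pos
  -- conclude for x
  have hle : fκ (v x) ≤ fκ (v z) :=
    hf_mono _ _ (hpos x hx).le (hzmax (subset_closure hx))
  have hrle : fκ (v x) ^ (p - 1) ≤ fκ (v z) ^ (p - 1) :=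
    Real.rpow_le_rpow (hf_nonneg _ (hpos x hx).le) hle (by linarith)
  calc b * fκ (v x) ^ (p - 1) ≤ b * fκ (v z) ^ (p - 1) :=
        mul_le_mul_of_nonneg_left hrle hb.le
    _ ≤ lam := hz_bound
end
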